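/- Let T > 0 and let α, β, λ, ε, μ > 0 satisfy λ ≥ α + εμ/(4β). Let χ : [0,T] → ℝ³ be differentiable, χ̇ₛ : [0,T] → ℝ³, h : ℝ³ × ℝ → ℝ differentiable, and V : [0,T] → ℝ differentiable with V(t) ≥ β‖χ'(t) − χ̇ₛ(t)‖², V'(t) ≤ −λ V(t), and ⟨∇_χ h(χ(t),t), χ̇ₛ(t)⟩ + ∂ₜh(χ(t),t) ≥ −α h(χ(t),t) + (1/ε)‖∇_χ h(χ(t),t)‖² for all t ∈ [0,T]. If h(χ(0),0) − (1/μ)V(0) ≥ 0, then β‖χ'(t) − χ̇ₛ(t)‖² ≤ μ·h(χ(t),t) for all t ∈ [0,T]. -/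

import Mathlib

open scoped RealInnerProductSpace

/-- Chain rule for `t ↦ h (χ t, t)`. -/
lemma safety_chain_rule (χ : ℝ → EuclideanSpace ℝ (Fin 3))
    (h : EuclideanSpace ℝ (Fin 3) × ℝ → ℝ)
    (t : ℝ) (hχ : DifferentiableAt ℝ χ t) (hh : Differentiable ℝ h) :
    HasDerivAt (fun τ => h (χ τ, τ))
      (⟪gradient (fun x => h (x, t)) (χ t), deriv χ t⟫ + deriv (fun s => h (χ t, s)) t) t := by
  have hpair : HasDerivAt (fun τ => (χ τ, τ)) (deriv χ t, 1) t :=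
    hχ.hasDerivAt.prodMk (hasDerivAt_id t)
  have hcomp' := HasFDerivAt.comp_hasDerivAt (f := fun τ => (χ τ, τ)) t
    (hh (χ t, t)).hasFDerivAt hpair
  have hcomp : HasDerivAt (fun τ => h (χ τ, τ)) (fderiv ℝ h (χ t, t) (deriv χ t, 1)) t := hcomp'
  have hsplit : fderiv ℝ h (χ t, t) (deriv χ t, 1)
      = fderiv ℝ h (χ t, t) (deriv χ t, 0) + fderiv ℝ h (χ t, t) (0, 1) := by
    rw [← ContinuousLinearMap.map_add]
    norm_num
  have hgrad : ⟪gradient (fun x => h (x, t)) (χ t), deriv χ t⟫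
      = fderiv ℝ h (χ t, t) (deriv χ t, 0) := by
    have h1 : HasFDerivAt (fun x : EuclideanSpace ℝ (Fin 3) => h (x, t))
        ((fderiv ℝ h (χ t, t)).comp (ContinuousLinearMap.inl ℝ _ _)) (χ t) :=
      (hh (χ t, t)).hasFDerivAt.comp (χ t)
        ((hasFDerivAt_id (χ t)).prodMk (hasFDerivAt_const t (χ t)))
    rw [gradient, h1.fderiv, InnerProductSpace.toDual_symm_apply]
    rfl
  have htime : deriv (fun s => h (χ t, s)) t = fderiv ℝ h (χ t, t) (0, 1) := by
    have h2 : HasDerivAt (fun s => h (χ t, s)) (fderiv ℝ h (χ t, t) (0, 1)) t :=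
      (hh (χ t, t)).hasFDerivAt.comp_hasDerivAt t
        ((hasDerivAt_const t (χ t)).prodMk (hasDerivAt_id t))
    exact h2.deriv
  rw [hgrad, htime, ← hsplit]
  exact hcomp

set_option maxHeartbeats 1000000 in
/-- Corollary to Theorem 1 giving a quantitative safety margin: the squared
velocity tracking error of the full-order system is bounded by `(μ/β)` times the
current safety function value. -/
theorem full_order_tracking_error_bound
    (T α β lam ε μ : ℝ)
    (hT : 0 < T) (hα : 0 < α) (hβ : 0 < β) (hlam : 0 < lam) (hε : 0 < ε) (hμ : 0 < μ)
    (hparam : lam ≥ α + ε * μ / (4 * β))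
    (χ χs : ℝ → EuclideanSpace ℝ (Fin 3))
    (h : EuclideanSpace ℝ (Fin 3) × ℝ → ℝ)
    (V : ℝ → ℝ)
    (hχ : ∀ t ∈ Set.Icc (0 : ℝ) T, DifferentiableAt ℝ χ t)
    (hh : Differentiable ℝ h)
    (hV : ∀ t ∈ Set.Icc (0 : ℝ) T, DifferentiableAt ℝ V t)
    (hVlb : ∀ t ∈ Set.Icc (0 : ℝ) T, V t ≥ β * ‖deriv χ t - χs t‖ ^ 2)
    (hVdecay : ∀ t ∈ Set.Icc (0 : ℝ) T, deriv V t ≤ -lam * V t)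
    (hISSf : ∀ t ∈ Set.Icc (0 : ℝ) T,
      ⟪gradient (fun x => h (x, t)) (χ t), χs t⟫ + deriv (fun s => h (χ t, s)) t
        ≥ -α * h (χ t, t) + (1 / ε) * ‖gradient (fun x => h (x, t)) (χ t)‖ ^ 2)
    (hB0 : h (χ 0, 0) - (1 / μ) * V 0 ≥ 0) :
    ∀ t ∈ Set.Icc (0 : ℝ) T, β * ‖deriv χ t - χs t‖ ^ 2 ≤ μ * h (χ t, t) := by
  have hVnonneg : ∀ t ∈ Set.Icc (0 : ℝ) T, 0 ≤ V t := fun t ht =>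
    le_trans (by positivity) (hVlb t ht)
  set B : ℝ → ℝ := fun t => h (χ t, t) - (1 / μ) * V t with hBdef
  have hBderiv : ∀ t ∈ Set.Icc (0 : ℝ) T,
      HasDerivAt B (⟪gradient (fun x => h (x, t)) (χ t), deriv χ t⟫
        + deriv (fun s => h (χ t, s)) t - (1 / μ) * deriv V t) t := by
    intro t ht
    exact (safety_chain_rule χ h t (hχ t ht) hh).sub (((hV t ht).hasDerivAt).const_mul (1 / μ))
  have hBderiv_ge : ∀ t ∈ Set.Icc (0 : ℝ) T, deriv B t ≥ -α * B t := by
    intro t ht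
    rw [(hBderiv t ht).deriv]
    set G := gradient (fun x => h (x, t)) (χ t) with hG
    set e := deriv χ t - χs t with he
    have hinner : ⟪G, deriv χ t⟫ = ⟪G, e⟫ + ⟪G, χs t⟫ := by
      rw [he, inner_sub_right]; ring
    have hlow : -(‖G‖ * ‖e‖) ≤ ⟪G, e⟫ := by
      have h1 := abs_real_inner_le_norm G e
      have h2 := neg_abs_le (⟪G, e⟫)
      linarith
    have hiss : ⟪G, χs t⟫ + deriv (fun s => h (χ t, s)) t
        ≥ -α * h (χ t, t) + (1 / ε) * ‖G‖ ^ 2 := hISSf t ht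
    have hVd := hVdecay t ht
    have hVl : V t ≥ β * ‖e‖ ^ 2 := hVlb t ht
    have hVn := hVnonneg t ht
    clear_value G e
    have hyoung : ‖G‖ * ‖e‖ ≤ (1 / ε) * ‖G‖ ^ 2 + (ε / 4) * ‖e‖ ^ 2 := by
      rw [← mul_le_mul_iff_right₀ hε]
      have h8 : ε * ((1 / ε) * ‖G‖ ^ 2 + (ε / 4) * ‖e‖ ^ 2)
          = ‖G‖ ^ 2 + (ε ^ 2 / 4) * ‖e‖ ^ 2 := by field_simp
      rw [h8]
      nlinarith [sq_nonneg (‖G‖ - (ε / 2) * ‖e‖)]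
    have hkey : ⟪G, e⟫ ≥ -((1 / ε) * ‖G‖ ^ 2 + (ε / 4) * ‖e‖ ^ 2) := by linarith
    have hstep1 : (1 / μ) * deriv V t ≤ -((lam / μ) * V t) := by
      rw [← mul_le_mul_iff_right₀ hμ]
      have e1 : μ * ((1 / μ) * deriv V t) = deriv V t := by field_simp
      have e2 : μ * -((lam / μ) * V t) = -(lam * V t) := by field_simp
      rw [e1, e2]; linarith
    have hstep2 : (ε / 4) * ‖e‖ ^ 2 ≤ (ε / (4 * β)) * V t := by
      have hc : (0:ℝ) ≤ ε / (4 * β) := by positivity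
      have h4 : ε / (4 * β) * (β * ‖e‖ ^ 2) ≤ ε / (4 * β) * V t :=
        mul_le_mul_of_nonneg_left hVl hc
      have h5 : ε / (4 * β) * (β * ‖e‖ ^ 2) = (ε / 4) * ‖e‖ ^ 2 := by
        field_simp
      linarith
    have hp2 : ε * μ ≤ (lam - α) * (4 * β) := by
      have h4β : (0:ℝ) < 4 * β := by positivity
      exact (div_le_iff₀ h4β).mp (by linarith [hparam])
    have hcoef : α / μ + ε / (4 * β) ≤ lam / μ := by
      rw [div_add_div _ _ hμ.ne' (by positivity : (4 * β : ℝ) ≠ 0),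
        div_le_div_iff₀ (by positivity) hμ]
      nlinarith [hp2, hμ.le, mul_pos hμ hβ]
    have hstep3 : (α / μ) * V t + (ε / (4 * β)) * V t ≤ (lam / μ) * V t := by
      have := mul_le_mul_of_nonneg_right hcoef hVn
      nlinarith
    have hBt : B t = h (χ t, t) - 1 / μ * V t := rfl
    rw [hinner, hBt]
    set ie : ℝ := ⟪G, e⟫ with hie
    set ics : ℝ := ⟪G, χs t⟫ with hics
    set D : ℝ := deriv (fun s => h (χ t, s)) t with hD
    set nG : ℝ := ‖G‖ with hnG
    set ne' : ℝ := ‖e‖ with hne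
    set H : ℝ := h (χ t, t) with hH
    clear_value ie ics D nG ne' H
    ring_nf at hkey hiss hstep1 hstep2 hstep3 ⊢
    linarith only [hkey, hiss, hstep1, hstep2, hstep3]
  -- Grönwall-type argument: B stays nonnegative
  have hfd : ∀ t ∈ Set.Icc (0 : ℝ) T,
      HasDerivAt (fun t => Real.exp (α * t) * B t)
        (Real.exp (α * t) * α * B t + Real.exp (α * t) * deriv B t) t := by
    intro t ht
    have hexp : HasDerivAt (fun t : ℝ => Real.exp (α * t)) (Real.exp (α * t) * α) t := by
      simpa using ((hasDerivAt_id t).const_mul α).exp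
    have hBd : HasDerivAt B (deriv B t) t := by
      rw [(hBderiv t ht).deriv]; exact hBderiv t ht
    exact hexp.mul hBd
  have hmono : MonotoneOn (fun t => Real.exp (α * t) * B t) (Set.Icc 0 T) := by
    apply monotoneOn_of_deriv_nonneg (convex_Icc 0 T)
    · exact fun t ht => ((hfd t ht).continuousAt).continuousWithinAt
    · intro t ht
      rw [interior_Icc] at ht
      exact ((hfd t (Set.Ioo_subset_Icc_self ht)).differentiableAt).differentiableWithinAt
    · intro t ht
      rw [interior_Icc] at ht
      have ht' := Set.Ioo_subset_Icc_self ht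
      rw [(hfd t ht').deriv]
      have hge := hBderiv_ge t ht'
      nlinarith [Real.exp_pos (α * t), hge]
  have hBnonneg : ∀ t ∈ Set.Icc (0 : ℝ) T, 0 ≤ B t := by
    intro t ht
    have h0mem : (0 : ℝ) ∈ Set.Icc (0 : ℝ) T := ⟨le_refl 0, hT.le⟩
    have hle := hmono h0mem ht ht.1
    simp only [mul_zero, Real.exp_zero, one_mul] at hle
    have hB0' : (0 : ℝ) ≤ B 0 := hB0
    have : (0 : ℝ) ≤ Real.exp (α * t) * B t := le_trans hB0' hle
    nlinarith [Real.exp_pos (α * t)]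
  intro t ht
  have hBt := hBnonneg t ht
  have hVl := hVlb t ht
  have hBt' : B t = h (χ t, t) - 1 / μ * V t := rfl
  rw [hBt'] at hBt
  have hμV : V t ≤ μ * h (χ t, t) := by
    have := mul_le_mul_of_nonneg_left (le_of_sub_nonneg hBt) hμ.le
    calc V t = μ * (1 / μ * V t) := by field_simp
    _ ≤ μ * h (χ t, t) := by nlinarith [hμ]
  linarith
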